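/- Let G be a connected undirected graph on vertices {1,…,n} (n ≥ 2), d ≥ 1, and let ν = inf{ (∑_i ‖F(x)_i‖²)^{1/2} : ∑_i ‖x_i − x̄‖² = 1 }. Suppose x : [0,T] → (ℝ^d)^n is differentiable, satisfies xᵢ′(t) = F(x(t))_i for all i and all t ∈ [0,T], and x_i(t) ≠ x_j(t) for every edge {i,j} of G and every t ∈ [0,T]. Then φ(x(T)) ≤ φ(x(0)) − ν²·T, where φ(x) = ∑_{{i,j} ∈ E} ‖x_j − x_i‖ is the sum of distances over the (undirected) edges. In particular, such a coincidence-free solution can exist only for T ≤ φ(x(0))/ν². -/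

import Mathlib

open Finset

/-- The bearing from agent `i` to agent `j`: the unit vector pointing from `x i` to `x j`,
or `0` when the agents coincide. -/
noncomputable def bearing {d n : ℕ} (x : Fin n → EuclideanSpace ℝ (Fin d)) (i j : Fin n) :
    EuclideanSpace ℝ (Fin d) :=
  ‖x j - x i‖⁻¹ • (x j - x i)

/-- The bearing-only consensus vector field `F(x)_i = ∑_{j ∈ N_i} u_{ij}(x)`. -/
noncomputable def consField {d n : ℕ} (G : SimpleGraph (Fin n)) [DecidableRel G.Adj]
    (x : Fin n → EuclideanSpace ℝ (Fin d)) (i : Fin n) : EuclideanSpace ℝ (Fin d) :=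
  ∑ j ∈ G.neighborFinset i, bearing x i j

/-- The potential `φ(x) = ∑_{{i,j} ∈ E} ‖x_j - x_i‖`: sum of distances over undirected edges,
each unordered pair counted once (hence half the sum over ordered adjacent pairs). -/
noncomputable def consPotential {d n : ℕ} (G : SimpleGraph (Fin n)) [DecidableRel G.Adj]
    (x : Fin n → EuclideanSpace ℝ (Fin d)) : ℝ :=
  (1 / 2) * ∑ i, ∑ j ∈ G.neighborFinset i, ‖x j - x i‖

section Aux

variable {E : Type*} [NormedAddCommGroup E] [InnerProductSpace ℝ E]

lemma my_hasDerivAt_norm {y : ℝ → E} {y' : E} {t : ℝ} (hy : HasDerivAt y y' t)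
    (h0 : y t ≠ 0) :
    HasDerivAt (fun s => ‖y s‖) ((inner ℝ (‖y t‖⁻¹ • y t) y' : ℝ)) t := by
  have hn : ‖y t‖ ≠ 0 := norm_ne_zero_iff.mpr h0
  have hne : (inner ℝ (y t) (y t) : ℝ) ≠ 0 := by
    rw [real_inner_self_eq_norm_sq]
    positivity
  have h := (hy.inner ℝ hy).sqrt hne
  have heq : (fun s => Real.sqrt (inner ℝ (y s) (y s) : ℝ)) = fun s => ‖y s‖ := by
    funext s
    rw [real_inner_self_eq_norm_mul_norm, Real.sqrt_mul_self (norm_nonneg _)]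
  rw [heq] at h
  convert h using 1
  rw [real_inner_smul_left, real_inner_self_eq_norm_mul_norm,
    Real.sqrt_mul_self (norm_nonneg _), real_inner_comm y' (y t)]
  field_simp
  ring

lemma my_unit_smul (v : E) {s : ℝ} (hs : 0 < s) :
    ‖s • v‖⁻¹ • (s • v) = ‖v‖⁻¹ • v := by
  rw [norm_smul, Real.norm_eq_abs, abs_of_pos hs, smul_smul, mul_inv,
    mul_comm s⁻¹ ‖v‖⁻¹, mul_assoc, inv_mul_cancel₀ hs.ne', mul_one]

end Aux

lemma my_sum_adj_swap {n : ℕ} (G : SimpleGraph (Fin n)) [DecidableRel G.Adj]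
    (f : Fin n → Fin n → ℝ) :
    ∑ i, ∑ j ∈ G.neighborFinset i, f i j = ∑ i, ∑ j ∈ G.neighborFinset i, f j i := by
  simp_rw [SimpleGraph.neighborFinset_eq_filter, Finset.sum_filter]
  rw [Finset.sum_comm]
  exact Finset.sum_congr rfl fun a _ => Finset.sum_congr rfl fun b _ =>
    if_congr (G.adj_comm b a) rfl rfl

lemma my_bearing_swap {d n : ℕ} (x : Fin n → EuclideanSpace ℝ (Fin d)) (i j : Fin n) :
    bearing x j i = -bearing x i j := by
  unfold bearing
  rw [show x i - x j = -(x j - x i) by abel, norm_neg, smul_neg]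

lemma my_field_identity {d n : ℕ} (G : SimpleGraph (Fin n)) [DecidableRel G.Adj]
    (y : Fin n → EuclideanSpace ℝ (Fin d)) :
    (1 / 2) * ∑ i, ∑ j ∈ G.neighborFinset i,
        (inner ℝ (bearing y i j) (consField G y j - consField G y i) : ℝ)
      = -(∑ i, ‖consField G y i‖ ^ 2) := by
  have h1 : ∑ i, ∑ j ∈ G.neighborFinset i, (inner ℝ (bearing y i j) (consField G y i) : ℝ)
      = ∑ i, ‖consField G y i‖ ^ 2 := by
    refine Finset.sum_congr rfl fun i _ => ?_
    rw [← sum_inner, ← consField, real_inner_self_eq_norm_sq]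
  have h2 : ∑ i, ∑ j ∈ G.neighborFinset i, (inner ℝ (bearing y i j) (consField G y j) : ℝ)
      = -∑ i, ‖consField G y i‖ ^ 2 := by
    rw [my_sum_adj_swap G (fun i j => (inner ℝ (bearing y i j) (consField G y j) : ℝ)), ← h1,
      ← Finset.sum_neg_distrib]
    refine Finset.sum_congr rfl fun i _ => ?_
    rw [← Finset.sum_neg_distrib]
    refine Finset.sum_congr rfl fun j _ => ?_
    rw [my_bearing_swap y i j, inner_neg_left]
  simp_rw [inner_sub_right, Finset.sum_sub_distrib]
  rw [h1, h2]
  ring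

theorem stmt_5 {d n : ℕ} (hd : 1 ≤ d) (hn : 2 ≤ n)
    (G : SimpleGraph (Fin n)) [DecidableRel G.Adj] (hG : G.Connected)
    (ν : ℝ)
    (hν : ν = sInf { r : ℝ | ∃ x : Fin n → EuclideanSpace ℝ (Fin d),
        (∑ i, ‖x i - (n : ℝ)⁻¹ • ∑ j, x j‖ ^ 2) = 1 ∧
        r = Real.sqrt (∑ i, ‖consField G x i‖ ^ 2) })
    (T : ℝ) (hT : 0 ≤ T)
    (x : ℝ → Fin n → EuclideanSpace ℝ (Fin d))
    (hode : ∀ i, ∀ t ∈ Set.Icc (0 : ℝ) T,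
      HasDerivAt (fun s => x s i) (consField G (x t) i) t)
    (hfree : ∀ t ∈ Set.Icc (0 : ℝ) T, ∀ i j, G.Adj i j → x t i ≠ x t j) :
    consPotential G (x T) ≤ consPotential G (x 0) - ν ^ 2 * T := by
  -- the set in the definition of ν
  set S : Set ℝ := { r : ℝ | ∃ x : Fin n → EuclideanSpace ℝ (Fin d),
        (∑ i, ‖x i - (n : ℝ)⁻¹ • ∑ j, x j‖ ^ 2) = 1 ∧
        r = Real.sqrt (∑ i, ‖consField G x i‖ ^ 2) } with hS
  have hSnonneg : ∀ r ∈ S, (0:ℝ) ≤ r := by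
    rintro r ⟨y, -, rfl⟩
    exact Real.sqrt_nonneg _
  have hν0 : 0 ≤ ν := hν ▸ Real.sInf_nonneg hSnonneg
  -- an edge of G
  obtain ⟨a, b, hab⟩ : ∃ a b : Fin n, G.Adj a b := by
    have h01 : (⟨0, by omega⟩ : Fin n) ≠ ⟨1, by omega⟩ := by
      simp [Fin.ext_iff]
    obtain ⟨w⟩ := hG.preconnected ⟨0, by omega⟩ ⟨1, by omega⟩
    cases w with
    | cons h p => exact ⟨_, _, h⟩
  -- key pointwise bound: ν² ≤ ∑ ‖F(x t)‖² for t ∈ [0,T]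
  have hkey : ∀ t ∈ Set.Icc (0:ℝ) T, ν ^ 2 ≤ ∑ i, ‖consField G (x t) i‖ ^ 2 := by
    intro t ht
    set c : EuclideanSpace ℝ (Fin d) := (n : ℝ)⁻¹ • ∑ j, x t j with hc
    set Q : ℝ := ∑ i, ‖x t i - c‖ ^ 2 with hQ
    have hQnonneg : 0 ≤ Q := Finset.sum_nonneg fun i _ => by positivity
    have hQpos : 0 < Q := by
      rcases hQnonneg.lt_or_eq with h | h
      · exact h
      · exfalso
        have hall : ∀ i, x t i = c := by
          intro i
          have := (Finset.sum_eq_zero_iff_of_nonneg (fun i _ => by positivity)).mp h.symm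
            i (Finset.mem_univ i)
          have : ‖x t i - c‖ = 0 := by nlinarith [norm_nonneg (x t i - c)]
          rw [norm_eq_zero, sub_eq_zero] at this
          exact this
        exact hfree t ht a b hab (by rw [hall a, hall b])
    set s : ℝ := Real.sqrt Q with hs
    have hspos : 0 < s := Real.sqrt_pos.mpr hQpos
    set y : Fin n → EuclideanSpace ℝ (Fin d) := fun i => s⁻¹ • (x t i - c) with hy
    -- consField G y = consField G (x t)
    have hFy : ∀ i, consField G y i = consField G (x t) i := by
      intro i
      refine Finset.sum_congr rfl fun j _ => ?_
      have hdiff : y j - y i = s⁻¹ • (x t j - x t i) := by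
        simp only [hy, ← smul_sub]
        congr 1
        abel
      unfold bearing
      rw [hdiff, my_unit_smul _ (inv_pos.mpr hspos)]
    -- centroid of y is 0
    have hn0 : (n : ℝ) ≠ 0 := Nat.cast_ne_zero.mpr (by omega)
    have hycen : (n : ℝ)⁻¹ • ∑ j, y j = 0 := by
      have hsum0 : ∑ j, y j = 0 := by
        simp only [hy]
        rw [← Finset.smul_sum, Finset.sum_sub_distrib, Finset.sum_const, Finset.card_univ,
          Fintype.card_fin, ← Nat.cast_smul_eq_nsmul ℝ, hc, smul_inv_smul₀ hn0, sub_self,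
          smul_zero]
      rw [hsum0, smul_zero]
    have hmem : Real.sqrt (∑ i, ‖consField G (x t) i‖ ^ 2) ∈ S := by
      refine ⟨y, ?_, by rw [funext hFy]⟩
      rw [hycen]
      simp only [sub_zero]
      have : ∀ i, ‖y i‖ ^ 2 = s⁻¹ ^ 2 * ‖x t i - c‖ ^ 2 := by
        intro i
        rw [hy, norm_smul, Real.norm_eq_abs, abs_of_pos (inv_pos.mpr hspos), mul_pow]
      rw [Finset.sum_congr rfl fun i _ => this i, ← Finset.mul_sum, ← hQ]
      rw [hs, inv_pow, Real.sq_sqrt hQpos.le, inv_mul_cancel₀ hQpos.ne']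
    have hle : ν ≤ Real.sqrt (∑ i, ‖consField G (x t) i‖ ^ 2) := by
      rw [hν]
      exact csInf_le ⟨0, hSnonneg⟩ hmem
    calc ν ^ 2 ≤ (Real.sqrt (∑ i, ‖consField G (x t) i‖ ^ 2)) ^ 2 := by
          exact pow_le_pow_left₀ hν0 hle 2
      _ = ∑ i, ‖consField G (x t) i‖ ^ 2 := Real.sq_sqrt
          (Finset.sum_nonneg fun i _ => by positivity)
  -- derivative of the potential along the flow
  have hderiv : ∀ t ∈ Set.Icc (0:ℝ) T,
      HasDerivAt (fun s => consPotential G (x s))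
        (-(∑ i, ‖consField G (x t) i‖ ^ 2)) t := by
    intro t ht
    have hterm : ∀ i, ∀ j ∈ G.neighborFinset i,
        HasDerivAt (fun s => ‖x s j - x s i‖)
          ((inner ℝ (bearing (x t) i j) (consField G (x t) j - consField G (x t) i) : ℝ)) t := by
      intro i j hj
      rw [SimpleGraph.mem_neighborFinset] at hj
      have hy : HasDerivAt (fun s => x s j - x s i)
          (consField G (x t) j - consField G (x t) i) t :=
        (hode j t ht).sub (hode i t ht)
      have h0 : x t j - x t i ≠ 0 :=
        sub_ne_zero.mpr (hfree t ht j i hj.symm)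
      exact my_hasDerivAt_norm hy h0
    have hsum : HasDerivAt (fun s => ∑ i, ∑ j ∈ G.neighborFinset i, ‖x s j - x s i‖)
        (∑ i, ∑ j ∈ G.neighborFinset i,
          (inner ℝ (bearing (x t) i j) (consField G (x t) j - consField G (x t) i) : ℝ)) t := by
      refine HasDerivAt.fun_sum fun i _ => ?_
      exact HasDerivAt.fun_sum fun j hj => hterm i j hj
    have := hsum.const_mul (1/2 : ℝ)
    rw [my_field_identity G (x t)] at this
    exact this
  -- conclude via mean value / monotonicity
  set g : ℝ → ℝ := fun t => consPotential G (x t) + ν ^ 2 * t with hg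
  have hgderiv : ∀ t ∈ Set.Icc (0:ℝ) T,
      HasDerivAt g (-(∑ i, ‖consField G (x t) i‖ ^ 2) + ν ^ 2) t := by
    intro t ht
    have h2 : HasDerivAt (fun s : ℝ => ν ^ 2 * s) (ν ^ 2) t := by
      simpa using (hasDerivAt_id t).const_mul (ν ^ 2)
    exact (hderiv t ht).add h2
  have hanti : AntitoneOn g (Set.Icc 0 T) := by
    apply antitoneOn_of_deriv_nonpos (convex_Icc 0 T)
    · intro t ht
      exact (hgderiv t ht).continuousAt.continuousWithinAt
    · intro t ht
      rw [interior_Icc] at ht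
      exact ((hgderiv t (Set.mem_Icc_of_Ioo ht)).differentiableAt).differentiableWithinAt
    · intro t ht
      rw [interior_Icc] at ht
      have ht' := Set.mem_Icc_of_Ioo ht
      rw [(hgderiv t ht').deriv]
      have := hkey t ht'
      linarith
  have h0mem : (0:ℝ) ∈ Set.Icc (0:ℝ) T := Set.mem_Icc.mpr ⟨le_refl 0, hT⟩
  have hTmem : T ∈ Set.Icc (0:ℝ) T := Set.mem_Icc.mpr ⟨hT, le_refl T⟩
  have := hanti h0mem hTmem hT
  simp only [hg] at this
  linarith
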